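/- Let 𝒴 ⊆ ℂⁿ be a p-dimensional subspace whose smallest (p-th largest) Ritz value η_p of A in 𝒴 satisfies η_p > λ_{p+1}. Then 𝒴 ∩ span{x_{p+1}, …, xₙ} = {0}; equivalently, for X = [x₁, …, x_p] and any basis matrix Y ∈ ℂ^{n×p} of 𝒴, the p×p matrix XᴴY is invertible. -/

import Mathlib

/-- The Rayleigh quotient `ρ(v) = (vᴴAv)/(vᴴv)` of the Hermitian matrix `A`. -/
noncomputable def rayleigh {n : ℕ} (A : Matrix (Fin n) (Fin n) ℂ)
    (v : EuclideanSpace ℂ (Fin n)) : ℝ :=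
  ((inner ℂ v (Matrix.toEuclideanLin A v) : ℂ)).re / ‖v‖ ^ 2

/-- The `i`-th largest Ritz value (1-indexed, `i ∈ {1, …, dim S}`) of the Hermitian
matrix `A` in the subspace `S`, characterized via the Courant–Fischer max-min
principle applied inside `S` (equivalently, the `i`-th largest eigenvalue of
`SᴴAS` for any orthonormal basis matrix `S`). -/
noncomputable def ritzValue {n : ℕ} (A : Matrix (Fin n) (Fin n) ℂ)
    (S : Submodule ℂ (EuclideanSpace ℂ (Fin n))) (i : ℕ) : ℝ :=
  sSup {r : ℝ | ∃ T : Submodule ℂ (EuclideanSpace ℂ (Fin n)), T ≤ S ∧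
    Module.finrank ℂ T = i ∧ ∀ v ∈ T, v ≠ 0 → r ≤ rayleigh A v}

/-- `f(A) = ∑ j, f(λ_j) x_j x_jᴴ` as a linear operator, for eigenvalues `lam`
and orthonormal eigenvectors `x` of `A`. -/
noncomputable def matFun {n : ℕ} (lam : Fin n → ℝ)
    (x : Fin n → EuclideanSpace ℂ (Fin n)) (f : ℝ → ℝ) :
    EuclideanSpace ℂ (Fin n) →ₗ[ℂ] EuclideanSpace ℂ (Fin n) :=
  ∑ j : Fin n, (f (lam j) : ℂ) • ((innerSL ℂ (x j)).toLinearMap.smulRight (x j))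

/-- `y` is a Ritz vector of `A` in `S` associated with the Ritz value `η`:
`y ∈ S`, `y ≠ 0`, `ρ(y) = η` and `Ay − ηy ⊥ S`. -/
def IsRitzVector {n : ℕ} (A : Matrix (Fin n) (Fin n) ℂ)
    (S : Submodule ℂ (EuclideanSpace ℂ (Fin n))) (η : ℝ)
    (y : EuclideanSpace ℂ (Fin n)) : Prop :=
  y ∈ S ∧ y ≠ 0 ∧ rayleigh A y = η ∧
    ∀ v ∈ S, (inner ℂ v (Matrix.toEuclideanLin A y - (η : ℂ) • y) : ℂ) = 0


open Submodule Finset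

section Aux

variable {n : ℕ} (A : Matrix (Fin n) (Fin n) ℂ)

/-- orthonormal basis from the eigenvectors -/
noncomputable def onb {n : ℕ} (hn : 0 < n) (x : Fin n → EuclideanSpace ℂ (Fin n))
    (hx : Orthonormal ℂ x) : OrthonormalBasis (Fin n) ℂ (EuclideanSpace ℂ (Fin n)) :=
  OrthonormalBasis.mk hx
    (by
      haveI : Nonempty (Fin n) := ⟨⟨0, hn⟩⟩
      exact (hx.linearIndependent.span_eq_top_of_card_eq_finrank (by simp)).ge)

lemma onb_coe {n : ℕ} (hn : 0 < n) (x : Fin n → EuclideanSpace ℂ (Fin n))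
    (hx : Orthonormal ℂ x) : ⇑(onb hn x hx) = x := by
  simp [onb]

lemma neg_opnorm_le_rayleigh (v : EuclideanSpace ℂ (Fin n)) (hv : v ≠ 0) :
    -‖LinearMap.toContinuousLinearMap (Matrix.toEuclideanLin A)‖ ≤ rayleigh A v := by
  set f := LinearMap.toContinuousLinearMap (Matrix.toEuclideanLin A) with hf
  have hvpos : (0:ℝ) < ‖v‖ ^ 2 := pow_pos (norm_pos_iff.mpr hv) 2
  have h1 : ‖(inner ℂ v (Matrix.toEuclideanLin A v) : ℂ)‖ ≤ ‖v‖ * (‖f‖ * ‖v‖) := by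
    calc ‖(inner ℂ v (Matrix.toEuclideanLin A v) : ℂ)‖ ≤ ‖v‖ * ‖Matrix.toEuclideanLin A v‖ :=
          norm_inner_le_norm _ _
      _ ≤ ‖v‖ * (‖f‖ * ‖v‖) := by
          have := f.le_opNorm v
          have : ‖Matrix.toEuclideanLin A v‖ ≤ ‖f‖ * ‖v‖ := this
          nlinarith [norm_nonneg v]
  have h2 : -(‖v‖ * (‖f‖ * ‖v‖)) ≤ ((inner ℂ v (Matrix.toEuclideanLin A v) : ℂ)).re := by
    have := Complex.abs_re_le_norm (inner ℂ v (Matrix.toEuclideanLin A v) : ℂ)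
    have h3 := abs_le.mp (this.trans h1)
    linarith [h3.1]
  rw [rayleigh, le_div_iff₀ hvpos]
  nlinarith [h2]

end Aux

lemma inner_eq_zero_of_mem_tail {n p : ℕ} (x : Fin n → EuclideanSpace ℂ (Fin n))
    (hx : Orthonormal ℂ x) {v : EuclideanSpace ℂ (Fin n)}
    (hv : v ∈ span ℂ (x '' {j | p ≤ (j : ℕ)}))
    {i : Fin n} (hi : (i : ℕ) < p) : (inner ℂ (x i) v : ℂ) = 0 := by
  induction hv using Submodule.span_induction with
  | mem w hw =>
      obtain ⟨j, hj, rfl⟩ := hw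
      exact hx.2 (by rintro rfl; exact absurd hj (by simpa using hi.not_ge))
  | zero => exact inner_zero_right _
  | add u w _ _ h1 h2 => rw [inner_add_right, h1, h2, add_zero]
  | smul a u _ h => rw [inner_smul_right, h, mul_zero]

lemma mem_tail_of_orth {n p : ℕ} (hn : 0 < n) (x : Fin n → EuclideanSpace ℂ (Fin n))
    (hx : Orthonormal ℂ x) {w : EuclideanSpace ℂ (Fin n)}
    (hw : ∀ i : Fin n, (i : ℕ) < p → (inner ℂ (x i) w : ℂ) = 0) :
    w ∈ span ℂ (x '' {j | p ≤ (j : ℕ)}) := by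
  set b := onb hn x hx with hbdef
  have hb : ⇑b = x := onb_coe hn x hx
  rw [← b.sum_repr w]
  refine Submodule.sum_mem _ fun j _ => ?_
  by_cases hj : p ≤ (j : ℕ)
  · exact Submodule.smul_mem _ _ (Submodule.subset_span ⟨j, hj, by rw [hb]⟩)
  · have : b.repr w j = 0 := by
      rw [b.repr_apply_apply, hb]; exact hw j (by omega)
    rw [this, zero_smul]; exact Submodule.zero_mem _

lemma rayleigh_le_tail {n p : ℕ} (hpn : p < n) (A : Matrix (Fin n) (Fin n) ℂ)
    (lam : Fin n → ℝ) (hlam : Antitone lam)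
    (x : Fin n → EuclideanSpace ℂ (Fin n)) (hx : Orthonormal ℂ x)
    (heig : ∀ j, Matrix.toEuclideanLin A (x j) = (lam j : ℂ) • x j)
    {v : EuclideanSpace ℂ (Fin n)}
    (hv : v ∈ span ℂ (x '' {j | p ≤ (j : ℕ)})) (hv0 : v ≠ 0) :
    rayleigh A v ≤ lam ⟨p, hpn⟩ := by
  have hn : 0 < n := lt_of_le_of_lt (Nat.zero_le p) hpn
  set b := onb hn x hx with hbdef
  have hb : ⇑b = x := onb_coe hn x hx
  set c : Fin n → ℂ := fun j => b.repr v j with hc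
  have hcx : ∀ j, (inner ℂ (x j) v : ℂ) = c j := fun j => by
    rw [hc]; simp only; rw [b.repr_apply_apply, hb]
  have hcz : ∀ j : Fin n, (j : ℕ) < p → c j = 0 := fun j hj => by
    rw [← hcx]; exact inner_eq_zero_of_mem_tail x hx hv hj
  have hvsum : v = ∑ j, c j • x j := by
    conv_lhs => rw [← b.sum_repr v]
    simp [hb, hc]
  have hvxj : ∀ j, (inner ℂ v (x j) : ℂ) = starRingEnd ℂ (c j) := fun j => by
    rw [← inner_conj_symm, hcx]
  have hAv : Matrix.toEuclideanLin A v = ∑ j, (c j * (lam j : ℂ)) • x j := by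
    conv_lhs => rw [hvsum]
    rw [map_sum]
    exact Finset.sum_congr rfl fun j _ => by rw [map_smul, heig, smul_smul]
  have hinnerA : (inner ℂ v (Matrix.toEuclideanLin A v) : ℂ)
      = ∑ j, ((lam j * Complex.normSq (c j) : ℝ) : ℂ) := by
    rw [hAv, inner_sum]
    refine Finset.sum_congr rfl fun j _ => ?_
    rw [inner_smul_right, hvxj]
    push_cast
    calc c j * (lam j : ℂ) * starRingEnd ℂ (c j)
        = (lam j : ℂ) * (c j * starRingEnd ℂ (c j)) := by ring
      _ = (lam j : ℂ) * ((Complex.normSq (c j) : ℝ) : ℂ) := by rw [Complex.mul_conj]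
  have hre : ((inner ℂ v (Matrix.toEuclideanLin A v) : ℂ)).re
      = ∑ j, lam j * Complex.normSq (c j) := by
    rw [hinnerA, ← Complex.ofReal_sum, Complex.ofReal_re]
  have hinner1 : (inner ℂ v v : ℂ) = ∑ j, ((Complex.normSq (c j) : ℝ) : ℂ) := by
    nth_rewrite 2 [hvsum]
    rw [inner_sum]
    refine Finset.sum_congr rfl fun j _ => ?_
    rw [inner_smul_right, hvxj, Complex.mul_conj]
  have hnorm : ‖v‖ ^ 2 = ∑ j, Complex.normSq (c j) := by
    rw [← inner_self_eq_norm_sq (𝕜 := ℂ) v, hinner1, ← Complex.ofReal_sum]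
    simp
  have hpos : (0 : ℝ) < ‖v‖ ^ 2 := pow_pos (norm_pos_iff.mpr hv0) 2
  rw [rayleigh, div_le_iff₀ hpos, hre, hnorm, Finset.mul_sum]
  refine Finset.sum_le_sum fun j _ => ?_
  by_cases hj : (j : ℕ) < p
  · rw [hcz j hj]; simp
  · exact mul_le_mul_of_nonneg_right
      (hlam (by simpa [Fin.le_def] using not_lt.mp hj)) (Complex.normSq_nonneg _)

theorem stmt1 {n p : ℕ} (hp : 0 < p) (hpn : p < n)
    (A : Matrix (Fin n) (Fin n) ℂ) (hA : A.IsHermitian)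
    (lam : Fin n → ℝ) (hlam : Antitone lam)
    (x : Fin n → EuclideanSpace ℂ (Fin n)) (hx : Orthonormal ℂ x)
    (heig : ∀ j, Matrix.toEuclideanLin A (x j) = (lam j : ℂ) • x j)
    (Y : Submodule ℂ (EuclideanSpace ℂ (Fin n))) (hY : Module.finrank ℂ Y = p)
    (hηp : lam ⟨p, hpn⟩ < ritzValue A Y p) :
    Y ⊓ Submodule.span ℂ (x '' {j | p ≤ (j : ℕ)}) = ⊥ ∧
    ∀ B : Fin p → EuclideanSpace ℂ (Fin n), LinearIndependent ℂ B →
      Submodule.span ℂ (Set.range B) = Y →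
      IsUnit (Matrix.of fun i j : Fin p =>
        (inner ℂ (x (Fin.castLE hpn.le i)) (B j) : ℂ)) := by
  have hn : 0 < n := lt_of_le_of_lt (Nat.zero_le p) hpn
  have hkey : ∀ v ∈ Y, v ≠ 0 → ¬ (rayleigh A v ≤ lam ⟨p, hpn⟩) := by
    intro v hvY hv0 hray
    have hub : ∀ r ∈ {r : ℝ | ∃ T : Submodule ℂ (EuclideanSpace ℂ (Fin n)),
        T ≤ Y ∧ Module.finrank ℂ T = p ∧ ∀ w ∈ T, w ≠ 0 → r ≤ rayleigh A w},
        r ≤ lam ⟨p, hpn⟩ := by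
      rintro r ⟨T, hTY, hTr, hT⟩
      have hTeq : T = Y := Submodule.eq_of_le_of_finrank_eq hTY (by rw [hTr, hY])
      exact (hT v (hTeq ▸ hvY) hv0).trans hray
    have hne : {r : ℝ | ∃ T : Submodule ℂ (EuclideanSpace ℂ (Fin n)),
        T ≤ Y ∧ Module.finrank ℂ T = p ∧ ∀ w ∈ T, w ≠ 0 → r ≤ rayleigh A w}.Nonempty :=
      ⟨-‖LinearMap.toContinuousLinearMap (Matrix.toEuclideanLin A)‖,
        Y, le_rfl, hY, fun w _ hw0 => neg_opnorm_le_rayleigh A w hw0⟩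
    exact absurd hηp (not_lt.mpr (csSup_le hne hub))
  have hbot : Y ⊓ span ℂ (x '' {j | p ≤ (j : ℕ)}) = ⊥ := by
    rw [eq_bot_iff]
    rintro v ⟨hvY, hvS⟩
    simp only [Submodule.mem_bot]
    by_contra hv0
    exact hkey v hvY hv0 (rayleigh_le_tail hpn A lam hlam x hx heig hvS hv0)
  refine ⟨hbot, ?_⟩
  intro B hBli hBsp
  rw [Matrix.isUnit_iff_isUnit_det, isUnit_iff_ne_zero]
  intro hdet
  obtain ⟨cv, hcv0, hMc⟩ := Matrix.exists_mulVec_eq_zero_iff.mpr hdet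
  set w : EuclideanSpace ℂ (Fin n) := ∑ j, cv j • B j with hwdef
  have hwY : w ∈ Y := by
    rw [← hBsp]
    exact Submodule.sum_mem _ fun j _ =>
      Submodule.smul_mem _ _ (Submodule.subset_span ⟨j, rfl⟩)
  have hworth : ∀ i : Fin n, (i : ℕ) < p → (inner ℂ (x i) w : ℂ) = 0 := by
    intro i hi
    have hix : Fin.castLE hpn.le ⟨i.1, hi⟩ = i := by ext; simp
    have h1 := congrFun hMc ⟨i.1, hi⟩
    simp only [Matrix.mulVec, dotProduct, Matrix.of_apply, hix,
      Pi.zero_apply] at h1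
    rw [hwdef, inner_sum]
    rw [← h1]
    exact Finset.sum_congr rfl fun j _ => by rw [inner_smul_right, mul_comm]
  have hwtail : w ∈ span ℂ (x '' {j | p ≤ (j : ℕ)}) := mem_tail_of_orth hn x hx hworth
  have hw0 : w = 0 := by
    have hmem : w ∈ Y ⊓ span ℂ (x '' {j | p ≤ (j : ℕ)}) := ⟨hwY, hwtail⟩
    rw [hbot] at hmem
    simpa using hmem
  have hall := Fintype.linearIndependent_iff.mp hBli cv (by rw [← hwdef]; exact hw0)
  exact hcv0 (funext hall)
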